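/- Assume R is simply-laced and let 1 ≤ r ≤ n. Then the fundamental weight ω_r is minuscule if and only if w_{0, S∖{α_r}}(α_r) = α_0, where w_{0, S∖{α_r}} is the longest element of the parabolic subgroup W_{S∖{α_r}} of W generated by the simple reflections s_α with α ∈ S∖{α_r}. -/

import Mathlib

noncomputable section

open scoped Classical

local notation "⟪" x ", " y "⟫" => @inner ℝ _ _ x y

namespace PaperFormal

variable (V : Type*) [NormedAddCommGroup V] [InnerProductSpace ℝ V] [FiniteDimensional ℝ V]

/-- The reflection of the Euclidean space `V` in the hyperplane orthogonal to `v`,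
i.e. `β ↦ β - (2⟪β,v⟫/⟪v,v⟫) v`. -/
def sref (v : V) : V ≃ₗᵢ[ℝ] V := Submodule.reflection (ℝ ∙ v)ᗮ

/-- A reduced irreducible crystallographic root system `R` in the Euclidean space `V`,
together with a fixed base of simple roots `a 1, …, a n`. -/
structure RootSystemWithBase (n : ℕ) : Type _ where
  /-- the set of roots -/
  R : Set V
  /-- the simple roots `a 1, …, a n` (values outside `{1, …, n}` are irrelevant) -/
  a : ℕ → V
  finite : R.Finite
  ne_zero : ∀ β ∈ R, β ≠ 0
  refl_mem : ∀ α ∈ R, ∀ β ∈ R, sref V α β ∈ R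
  crystallographic : ∀ α ∈ R, ∀ β ∈ R, ∃ k : ℤ, 2 * ⟪β, α⟫ / ⟪α, α⟫ = (k : ℝ)
  reduced : ∀ α ∈ R, ∀ t : ℝ, t • α ∈ R → t = 1 ∨ t = -1
  irreducible : ∀ P : Set V, (∀ x ∈ R, ∀ y ∈ R, x ∈ P → ⟪x, y⟫ ≠ 0 → y ∈ P) →
      (R ∩ P).Nonempty → R ⊆ P
  simple_mem : ∀ i ∈ Finset.Icc 1 n, a i ∈ R
  indep : LinearIndependent ℝ (fun i : (Set.Icc 1 n : Set ℕ) => a i)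
  span_top : Submodule.span ℝ (a '' Set.Icc 1 n) = ⊤
  root_combo : ∀ β ∈ R, ∃ c : ℕ → ℤ, ((∀ i, 0 ≤ c i) ∨ (∀ i, c i ≤ 0)) ∧
      β = ∑ i ∈ Finset.Icc 1 n, (c i : ℝ) • a i

namespace RootSystemWithBase

variable {V} {n : ℕ} (S : RootSystemWithBase V n)

/-- The simple reflection `s i` associated to the simple root `a i`. -/
def s (i : ℕ) : V ≃ₗᵢ[ℝ] V := sref V (S.a i)

/-- The product of the simple reflections along a list of indices
(leftmost factor acting last). -/
def prodW (l : List ℕ) : V ≃ₗᵢ[ℝ] V := (l.map S.s).prod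

/-- The parabolic subgroup `W_J` of the Weyl group generated by the simple reflections
`s i` for `i ∈ J`. -/
def WJ (J : Set ℕ) : Subgroup (V ≃ₗᵢ[ℝ] V) :=
  Subgroup.closure (S.s '' (J ∩ Set.Icc 1 n))

/-- The Weyl group `W`, generated by all simple reflections. -/
def W : Subgroup (V ≃ₗᵢ[ℝ] V) := S.WJ Set.univ

/-- The length of `w` with respect to the simple reflections indexed by `J`:
the least length of a word in these reflections expressing `w`. -/
def lenJ (J : Set ℕ) (w : V ≃ₗᵢ[ℝ] V) : ℕ :=
  sInf {k | ∃ l : List ℕ, (∀ i ∈ l, i ∈ J ∩ Set.Icc 1 n) ∧ l.length = k ∧ w = S.prodW l}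

/-- The length function `ℓ` of the Weyl group. -/
def len (w : V ≃ₗᵢ[ℝ] V) : ℕ := S.lenJ Set.univ w

/-- `w` is the longest element `w_{0,J}` of the parabolic subgroup `W_J`. -/
def IsLongest (J : Set ℕ) (w : V ≃ₗᵢ[ℝ] V) : Prop :=
  w ∈ S.WJ J ∧ ∀ x ∈ S.WJ J, S.lenJ J x ≤ S.lenJ J w

/-- `β` is a positive root (with respect to the base `a`). -/
def IsPos (β : V) : Prop :=
  β ∈ S.R ∧ ∃ c : ℕ → ℝ, (∀ i, 0 ≤ c i) ∧ β = ∑ i ∈ Finset.Icc 1 n, c i • S.a i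

/-- `β` is a negative root. -/
def IsNeg (β : V) : Prop := S.IsPos (-β)

/-- `h` is the highest root `α_0`: a root such that `h - β` is a nonnegative combination of
the simple roots for every root `β`. -/
def IsHighest (h : V) : Prop :=
  h ∈ S.R ∧ ∀ β ∈ S.R, ∃ c : ℕ → ℝ, (∀ i, 0 ≤ c i) ∧
    h - β = ∑ i ∈ Finset.Icc 1 n, c i • S.a i

/-- The root system is simply laced: all roots have the same length. -/
def SimplyLaced : Prop := ∀ α ∈ S.R, ∀ β ∈ S.R, ⟪α, α⟫ = ⟪β, β⟫

/-- `ω` is the fundamental weight `ω_r` dual to the simple root `a r`: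
`⟨ω, a j⟩ = δ_{rj}` for `1 ≤ j ≤ n`. -/
def IsFundamental (r : ℕ) (ω : V) : Prop :=
  ∀ j ∈ Finset.Icc 1 n, 2 * ⟪ω, S.a j⟫ / ⟪S.a j, S.a j⟫ = if j = r then 1 else 0

/-- A weight `ω` is minuscule: `⟨ω, β⟩ ≤ 1` for every positive root `β`. -/
def Minuscule (ω : V) : Prop := ∀ β, S.IsPos β → 2 * ⟪ω, β⟫ / ⟪β, β⟫ ≤ 1

end RootSystemWithBase


variable {V}

section Aux

lemma sref_apply' (v x : V) : sref V v x = x - (2 * ⟪x, v⟫ / ⟪v, v⟫) • v := by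
  rw [sref, Submodule.reflection_orthogonal_apply, Submodule.reflection_singleton_apply,
    real_inner_self_eq_norm_sq, real_inner_comm, RCLike.ofReal_real_eq_id]
  rw [two_smul]
  match_scalars <;> simp <;> ring

lemma sref_inv (v : V) : (sref V v)⁻¹ = sref V v := rfl

lemma sref_mul_self (v : V) : sref V v * sref V v = 1 :=
  Submodule.reflection_mul_reflection _

lemma sref_conj (u : V ≃ₗᵢ[ℝ] V) (v : V) : u * sref V v * u⁻¹ = sref V (u v) := by
  ext x
  have h1 : (u * sref V v * u⁻¹) x = u (sref V v (u⁻¹ x)) := rfl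
  have h2 : u (u⁻¹ x) = x := by simp
  have h3 : ⟪u⁻¹ x, v⟫ = ⟪x, u v⟫ := by
    conv_rhs => rw [← h2, u.inner_map_map]
  have h4 : ⟪v, v⟫ = ⟪u v, u v⟫ := (u.inner_map_map v v).symm
  rw [h1, sref_apply', sref_apply', map_sub, map_smul, h2, h3, h4]

namespace RootSystemWithBase

variable {n : ℕ} (S : RootSystemWithBase V n)

lemma s_apply (i : ℕ) (x : V) :
    S.s i x = x - (2 * ⟪x, S.a i⟫ / ⟪S.a i, S.a i⟫) • S.a i := sref_apply' _ _

lemma s_inv (i : ℕ) : (S.s i)⁻¹ = S.s i := rfl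

lemma s_mul_self (i : ℕ) : S.s i * S.s i = 1 := sref_mul_self _

lemma s_apply_self (i : ℕ) (hi : S.a i ≠ 0) : S.s i (S.a i) = -(S.a i) := by
  have h : ⟪S.a i, S.a i⟫ ≠ 0 := inner_self_ne_zero.mpr hi
  rw [s_apply, mul_div_assoc, div_self h, mul_one]
  module

/-- coefficients summing to zero vanish -/
lemma coeff_eq_zero {c : ℕ → ℝ} (h : ∑ i ∈ Finset.Icc 1 n, c i • S.a i = 0) :
    ∀ i ∈ Finset.Icc 1 n, c i = 0 := by
  have hli := linearIndependent_iff'.mp S.indep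
  have hconv : (∑ i : ↥(Set.Icc (1:ℕ) n), c (i : ℕ) • S.a (i : ℕ)) = ∑ i ∈ Finset.Icc 1 n, c i • S.a i := by
    rw [← Finset.sum_coe_sort (Finset.Icc 1 n) (fun i => c i • S.a i)]
    exact Fintype.sum_bijective (fun x => ⟨x.1, Finset.mem_Icc.mpr (Set.mem_Icc.mp x.2)⟩)
      ⟨fun x y hxy => Subtype.ext (by simpa using congrArg Subtype.val hxy),
       fun y => ⟨⟨y.1, Set.mem_Icc.mpr (Finset.mem_Icc.mp y.2)⟩, rfl⟩⟩ _ _ (fun x => rfl)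
  have key := hli Finset.univ (fun i => c (i : ℕ)) (by rw [hconv, h])
  intro i hi
  have hi' : i ∈ Set.Icc 1 n := by
    rw [Set.mem_Icc]; exact Finset.mem_Icc.mp hi
  exact key ⟨i, hi'⟩ (Finset.mem_univ _)

lemma coeff_unique {c d : ℕ → ℝ}
    (h : ∑ i ∈ Finset.Icc 1 n, c i • S.a i = ∑ i ∈ Finset.Icc 1 n, d i • S.a i) :
    ∀ i ∈ Finset.Icc 1 n, c i = d i := by
  intro i hi
  have h0 : ∑ i ∈ Finset.Icc 1 n, (c i - d i) • S.a i = 0 := by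
    simp only [sub_smul, Finset.sum_sub_distrib, h, sub_self]
  have := S.coeff_eq_zero h0 i hi
  linarith

lemma isPos_simple {i : ℕ} (hi : i ∈ Finset.Icc 1 n) : S.IsPos (S.a i) := by
  refine ⟨S.simple_mem i hi, fun k => if k = i then 1 else 0, fun k => by positivity, ?_⟩
  symm
  simp only [ite_smul, one_smul, zero_smul]
  rw [Finset.sum_ite_eq' (Finset.Icc 1 n) i S.a, if_pos hi]

lemma not_pos_and_neg {β : V} (h1 : S.IsPos β) (h2 : S.IsNeg β) : False := by
  obtain ⟨hβ, c, hc, hceq⟩ := h1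
  obtain ⟨hβ', d, hd, hdeq⟩ := h2
  have h0 : ∑ i ∈ Finset.Icc 1 n, (c i + d i) • S.a i = 0 := by
    simp only [add_smul, Finset.sum_add_distrib, ← hceq, ← hdeq]
    abel
  have hz := S.coeff_eq_zero h0
  have : β = 0 := by
    rw [hceq]
    refine Finset.sum_eq_zero (fun i hi => ?_)
    have := hz i hi
    have hci : c i = 0 := by have := hc i; have := hd i; linarith
    rw [hci, zero_smul]
  exact S.ne_zero β hβ this

lemma pos_or_neg {β : V} (hβ : β ∈ S.R) : S.IsPos β ∨ S.IsNeg β := by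
  obtain ⟨c, hsign, heq⟩ := S.root_combo β hβ
  rcases hsign with h | h
  · left
    exact ⟨hβ, fun i => (c i : ℝ), fun i => Int.cast_nonneg_iff.mpr (h i), heq⟩
  · right
    have hβ0 : β ≠ 0 := S.ne_zero β hβ
    have hinner : ⟪β, β⟫ ≠ 0 := inner_self_ne_zero.mpr hβ0
    have hneg : sref V β β = -β := by
      rw [sref_apply', mul_div_assoc, div_self hinner, mul_one]
      module
    refine ⟨hneg ▸ S.refl_mem β hβ β hβ, fun i => (-(c i : ℝ)), fun i => neg_nonneg.mpr (Int.cast_nonpos.mpr (h i)), ?_⟩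
    rw [heq, ← Finset.sum_neg_distrib]
    exact Finset.sum_congr rfl (fun i _ => (neg_smul _ _).symm)


lemma prodW_cons (i : ℕ) (l : List ℕ) : S.prodW (i :: l) = S.s i * S.prodW l := by
  simp [prodW]

lemma prodW_append (l1 l2 : List ℕ) : S.prodW (l1 ++ l2) = S.prodW l1 * S.prodW l2 := by
  simp [prodW]

lemma prodW_reverse (l : List ℕ) : S.prodW l.reverse = (S.prodW l)⁻¹ := by
  induction l with
  | nil => simp [prodW]
  | cons i l ih =>
    simp only [List.reverse_cons, prodW_append, ih, prodW_cons, mul_inv_rev, S.s_inv]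
    simp [prodW]

lemma s_mem_WJ {J : Set ℕ} {i : ℕ} (hi : i ∈ J ∩ Set.Icc 1 n) : S.s i ∈ S.WJ J :=
  Subgroup.subset_closure ⟨i, hi, rfl⟩

lemma prodW_mem_WJ {J : Set ℕ} {l : List ℕ} (hl : ∀ i ∈ l, i ∈ J ∩ Set.Icc 1 n) :
    S.prodW l ∈ S.WJ J := by
  induction l with
  | nil => exact one_mem _
  | cons i l ih =>
    rw [prodW_cons]
    exact mul_mem (S.s_mem_WJ (hl i List.mem_cons_self))
      (ih fun j hj => hl j (List.mem_cons_of_mem _ hj))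

lemma exists_word {J : Set ℕ} {g : V ≃ₗᵢ[ℝ] V} (hg : g ∈ S.WJ J) :
    ∃ l : List ℕ, (∀ i ∈ l, i ∈ J ∩ Set.Icc 1 n) ∧ g = S.prodW l := by
  induction hg using Subgroup.closure_induction with
  | mem x hx =>
    obtain ⟨i, hi, rfl⟩ := hx
    exact ⟨[i], by simpa using hi, by simp [prodW]⟩
  | one => exact ⟨[], by simp, rfl⟩
  | mul x y hx hy ihx ihy =>
    obtain ⟨l1, h1, rfl⟩ := ihx
    obtain ⟨l2, h2, rfl⟩ := ihy
    exact ⟨l1 ++ l2, fun i hi => ((List.mem_append.mp hi).elim (h1 i) (h2 i)),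
      (S.prodW_append l1 l2).symm⟩
  | inv x hx ihx =>
    obtain ⟨l, h1, rfl⟩ := ihx
    exact ⟨l.reverse, fun i hi => h1 i (List.mem_reverse.mp hi), (S.prodW_reverse l).symm⟩

lemma lenJ_le {J : Set ℕ} {g : V ≃ₗᵢ[ℝ] V} {l : List ℕ}
    (hl : ∀ i ∈ l, i ∈ J ∩ Set.Icc 1 n) (hg : g = S.prodW l) : S.lenJ J g ≤ l.length :=
  Nat.sInf_le ⟨l, hl, rfl, hg⟩

lemma lenJ_spec {J : Set ℕ} {g : V ≃ₗᵢ[ℝ] V} (hg : g ∈ S.WJ J) :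
    ∃ l : List ℕ, (∀ i ∈ l, i ∈ J ∩ Set.Icc 1 n) ∧ l.length = S.lenJ J g ∧ g = S.prodW l := by
  have hne : {k | ∃ l : List ℕ, (∀ i ∈ l, i ∈ J ∩ Set.Icc 1 n) ∧ l.length = k ∧
      g = S.prodW l}.Nonempty := by
    obtain ⟨l, hl, hgl⟩ := S.exists_word hg
    exact ⟨l.length, l, hl, rfl, hgl⟩
  exact Nat.sInf_mem hne

lemma WJ_maps_R {J : Set ℕ} {g : V ≃ₗᵢ[ℝ] V} (hg : g ∈ S.WJ J) :
    ∀ β ∈ S.R, g β ∈ S.R := by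
  have main : ∀ β ∈ S.R, g β ∈ S.R ∧ g⁻¹ β ∈ S.R := by
    induction hg using Subgroup.closure_induction with
    | mem x hx =>
      obtain ⟨i, hi, rfl⟩ := hx
      have hai : S.a i ∈ S.R :=
        S.simple_mem i (Finset.mem_Icc.mpr (Set.mem_Icc.mp hi.2))
      intro β hβ
      exact ⟨S.refl_mem _ hai β hβ, by rw [S.s_inv]; exact S.refl_mem _ hai β hβ⟩
    | one => intro β hβ; exact ⟨hβ, by simpa using hβ⟩
    | mul x y hx hy ihx ihy =>
      intro β hβ
      refine ⟨(ihx _ ((ihy β hβ).1)).1, ?_⟩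
      have h2 : (x*y)⁻¹ β = y⁻¹ (x⁻¹ β) := by rw [mul_inv_rev]; rfl
      rw [h2]
      exact (ihy _ ((ihx β hβ).2)).2
    | inv x hx ihx =>
      intro β hβ
      exact ⟨(ihx β hβ).2, by rw [inv_inv]; exact (ihx β hβ).1⟩
  exact fun β hβ => (main β hβ).1

lemma WJ_fixes {J : Set ℕ} {x : V} (hx : ∀ i ∈ J ∩ Set.Icc 1 n, ⟪x, S.a i⟫ = 0)
    {g : V ≃ₗᵢ[ℝ] V} (hg : g ∈ S.WJ J) : g x = x := by
  have main : g x = x ∧ g⁻¹ x = x := by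
    induction hg using Subgroup.closure_induction with
    | mem y hy =>
      obtain ⟨i, hi, rfl⟩ := hy
      have h1 : S.s i x = x := by
        rw [s_apply, hx i hi]
        simp
      exact ⟨h1, by rw [S.s_inv]; exact h1⟩
    | one => exact ⟨rfl, by simp⟩
    | mul a b ha hb iha ihb =>
      constructor
      · show a (b x) = x
        rw [ihb.1, iha.1]
      · have h2 : (a*b)⁻¹ x = b⁻¹ (a⁻¹ x) := by rw [mul_inv_rev]; rfl
        rw [h2, iha.2, ihb.2]
    | inv a ha iha => exact ⟨iha.2, by rw [inv_inv]; exact iha.1⟩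
  exact main.1

lemma isPos_s {i : ℕ} (hi : i ∈ Finset.Icc 1 n) {β : V} (hβ : S.IsPos β)
    (hne : β ≠ S.a i) : S.IsPos (S.s i β) := by
  obtain ⟨hβR, c, hc, hceq⟩ := hβ
  have hj : ∃ j ∈ Finset.Icc 1 n, j ≠ i ∧ 0 < c j := by
    by_contra hcon
    push_neg at hcon
    have hzero : ∀ k ∈ Finset.Icc 1 n, k ≠ i → c k = 0 := by
      intro k hk hki
      have h1 := hcon k hk hki
      have h2 := hc k
      linarith
    have hβi : β = c i • S.a i := by
      rw [hceq]
      exact Finset.sum_eq_single_of_mem i hi (fun k hk hki => by rw [hzero k hk hki, zero_smul])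
    rcases S.reduced (S.a i) (S.simple_mem i hi) (c i) (hβi ▸ hβR) with h1 | h1
    · exact hne (by rw [hβi, h1, one_smul])
    · have := hc i; linarith
  obtain ⟨j, hjmem, hji, hcj⟩ := hj
  set μ := 2 * ⟪β, S.a i⟫ / ⟪S.a i, S.a i⟫ with hμ
  have hite : ∑ k ∈ Finset.Icc 1 n, (if k = i then μ else 0) • S.a k = μ • S.a i := by
    simp only [ite_smul, zero_smul]
    rw [Finset.sum_ite_eq' (Finset.Icc 1 n) i (fun k => μ • S.a k), if_pos hi]
  have hβ' : S.s i β = ∑ k ∈ Finset.Icc 1 n, (c k - (if k = i then μ else 0)) • S.a k := by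
    rw [Finset.sum_congr rfl (fun k _ => sub_smul (c k) _ (S.a k)), Finset.sum_sub_distrib,
      hite, ← hceq, s_apply]
  have hβ'R : S.s i β ∈ S.R := S.refl_mem _ (S.simple_mem i hi) β hβR
  obtain ⟨d, hsign, hdeq⟩ := S.root_combo _ hβ'R
  have huniq : ∀ k ∈ Finset.Icc 1 n, ((d k : ℤ) : ℝ) = c k - (if k = i then μ else 0) :=
    S.coeff_unique (hdeq.symm.trans hβ')
  have hdj : (0:ℝ) < ((d j : ℤ) : ℝ) := by
    rw [huniq j hjmem, if_neg hji]
    linarith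
  rcases hsign with h | h
  · exact ⟨hβ'R, fun k => ((d k : ℤ) : ℝ), fun k => Int.cast_nonneg_iff.mpr (h k), hdeq⟩
  · exfalso
    have : ((d j : ℤ) : ℝ) ≤ 0 := Int.cast_nonpos.mpr (h j)
    linarith

lemma eq_simple_of_neg {i : ℕ} (hi : i ∈ Finset.Icc 1 n) {β : V} (hβ : S.IsPos β)
    (hneg : S.IsNeg (S.s i β)) : β = S.a i := by
  by_contra hne
  exact S.not_pos_and_neg (S.isPos_s hi hβ hne) hneg

lemma exchange {J : Set ℕ} : ∀ l : List ℕ, (∀ i ∈ l, i ∈ J ∩ Set.Icc 1 n) →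
    ∀ j ∈ J ∩ Set.Icc 1 n, S.IsNeg (S.prodW l (S.a j)) →
    ∃ l', (∀ i ∈ l', i ∈ J ∩ Set.Icc 1 n) ∧ l'.length + 1 = l.length ∧
      S.prodW l * S.s j = S.prodW l' := by
  intro l
  induction l with
  | nil =>
    intro _ j hj hneg
    exfalso
    have hjI : j ∈ Finset.Icc 1 n := Finset.mem_Icc.mpr (Set.mem_Icc.mp hj.2)
    exact S.not_pos_and_neg (S.isPos_simple hjI) hneg
  | cons i l ih =>
    intro hl j hj hneg
    have hiJ : i ∈ J ∩ Set.Icc 1 n := hl i List.mem_cons_self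
    have hiI : i ∈ Finset.Icc 1 n := Finset.mem_Icc.mpr (Set.mem_Icc.mp hiJ.2)
    have hl' : ∀ k ∈ l, k ∈ J ∩ Set.Icc 1 n := fun k hk => hl k (List.mem_cons_of_mem _ hk)
    have hjI : j ∈ Finset.Icc 1 n := Finset.mem_Icc.mpr (Set.mem_Icc.mp hj.2)
    have hγR : S.prodW l (S.a j) ∈ S.R :=
      S.WJ_maps_R (S.prodW_mem_WJ hl') _ (S.simple_mem j hjI)
    rcases S.pos_or_neg hγR with hpos | hneg2
    · have hsiγ : S.IsNeg (S.s i (S.prodW l (S.a j))) := by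
        have h1 : S.prodW (i :: l) (S.a j) = S.s i (S.prodW l (S.a j)) := by
          rw [prodW_cons]; rfl
        rwa [h1] at hneg
      have hγ : S.prodW l (S.a j) = S.a i := S.eq_simple_of_neg hiI hpos hsiγ
      have hconj : S.prodW l * S.s j * (S.prodW l)⁻¹ = S.s i := by
        have h2 := sref_conj (S.prodW l) (S.a j)
        rw [hγ] at h2
        exact h2
      have h3 : S.prodW l * S.s j = S.s i * S.prodW l := by
        rw [← hconj]
        group
      refine ⟨l, hl', by simp, ?_⟩
      rw [prodW_cons, mul_assoc, h3, ← mul_assoc, S.s_mul_self, one_mul]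
    · obtain ⟨l'', hl'', hlen, hkey⟩ := ih hl' j hj hneg2
      refine ⟨i :: l'', fun k hk => ?_, by simpa using hlen, ?_⟩
      · rcases List.mem_cons.mp hk with rfl | hk'
        · exact hiJ
        · exact hl'' k hk'
      · rw [prodW_cons, prodW_cons, mul_assoc, hkey]

lemma lenJ_inv_le {J : Set ℕ} {g : V ≃ₗᵢ[ℝ] V} (hg : g ∈ S.WJ J) :
    S.lenJ J g⁻¹ ≤ S.lenJ J g := by
  obtain ⟨l, hl, hlen, rfl⟩ := S.lenJ_spec hg
  calc S.lenJ J (S.prodW l)⁻¹ ≤ l.reverse.length :=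
        S.lenJ_le (fun i hi => hl i (List.mem_reverse.mp hi)) (S.prodW_reverse l).symm
    _ = l.length := List.length_reverse
    _ = _ := hlen

lemma isLongest_inv {J : Set ℕ} {w : V ≃ₗᵢ[ℝ] V} (hw : S.IsLongest J w) :
    S.IsLongest J w⁻¹ := by
  refine ⟨inv_mem hw.1, fun x hx => ?_⟩
  have h1 := hw.2 x hx
  have h2 : S.lenJ J w ≤ S.lenJ J w⁻¹ := by
    have h3 := S.lenJ_inv_le (inv_mem hw.1)
    rwa [inv_inv] at h3
  omega

lemma longest_neg {J : Set ℕ} {w : V ≃ₗᵢ[ℝ] V} (hw : S.IsLongest J w) {j : ℕ}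
    (hj : j ∈ J ∩ Set.Icc 1 n) : S.IsNeg (w (S.a j)) := by
  have hjI : j ∈ Finset.Icc 1 n := Finset.mem_Icc.mpr (Set.mem_Icc.mp hj.2)
  have hajR := S.simple_mem j hjI
  have hwR : w (S.a j) ∈ S.R := S.WJ_maps_R hw.1 _ hajR
  rcases S.pos_or_neg hwR with hpos | hneg
  · exfalso
    have hx : w * S.s j ∈ S.WJ J := mul_mem hw.1 (S.s_mem_WJ hj)
    obtain ⟨l, hl, hlen, hxl⟩ := S.lenJ_spec hx
    have haj0 : S.a j ≠ 0 := S.ne_zero _ hajR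
    have hxneg : S.IsNeg (S.prodW l (S.a j)) := by
      rw [← hxl]
      have h1 : (w * S.s j) (S.a j) = w (S.s j (S.a j)) := rfl
      rw [h1, S.s_apply_self j haj0, map_neg]
      show S.IsPos (-(-(w (S.a j))))
      rwa [neg_neg]
    obtain ⟨l', hl', hlen', hkey⟩ := S.exchange l hl j hj hxneg
    have hwl' : w = S.prodW l' := by
      rw [← hkey, ← hxl, mul_assoc, S.s_mul_self, mul_one]
    have h1 : S.lenJ J w ≤ l'.length := S.lenJ_le hl' hwl'
    have h2 : S.lenJ J (w * S.s j) ≤ S.lenJ J w := hw.2 _ hx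
    omega
  · exact hneg


end RootSystemWithBase

end Aux

/-- Assume `R` is simply laced and `1 ≤ r ≤ n`.  Then the fundamental weight
`ω_r` is minuscule if and only if `w_{0, S∖{α_r}}(α_r) = α_0`, where `w_{0, S∖{α_r}}` is the
longest element of the parabolic subgroup `W_{S∖{α_r}}`. -/
theorem statement3 {n : ℕ} (S : RootSystemWithBase V n) (hsl : S.SimplyLaced)
    (r : ℕ) (hr : r ∈ Finset.Icc 1 n) (α0 : V) (hα0 : S.IsHighest α0)
    (ω : V) (hω : S.IsFundamental r ω)
    (w0J : V ≃ₗᵢ[ℝ] V) (hw0J : S.IsLongest (Set.Icc 1 n \ {r}) w0J) :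
    S.Minuscule ω ↔ w0J (S.a r) = α0 := by
  classical
  have hrIcc := Finset.mem_Icc.mp hr
  have harR : S.a r ∈ S.R := S.simple_mem r hr
  have har0 : S.a r ≠ 0 := S.ne_zero _ harR
  set J : Set ℕ := Set.Icc 1 n \ {r} with hJdef
  set κ := ⟪S.a r, S.a r⟫ with hκdef
  have hκpos : 0 < κ :=
    lt_of_le_of_ne real_inner_self_nonneg (Ne.symm (inner_self_ne_zero.mpr har0))
  have hnorm : ∀ β ∈ S.R, ⟪β, β⟫ = κ := fun β hβ => hsl β hβ _ harR
  have hJmem : ∀ i, i ∈ J ∩ Set.Icc 1 n ↔ i ∈ Finset.Icc 1 n ∧ i ≠ r := by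
    intro i
    simp only [hJdef, Set.mem_inter_iff, Set.mem_diff, Set.mem_singleton_iff, Set.mem_Icc,
      Finset.mem_Icc]
    tauto
  have hωa : ∀ i ∈ Finset.Icc 1 n, ⟪ω, S.a i⟫ = if i = r then κ/2 else 0 := by
    intro i hi
    have h1 := hω i hi
    have h2 : ⟪S.a i, S.a i⟫ = κ := hnorm _ (S.simple_mem i hi)
    rw [h2] at h1
    have hκ0 : κ ≠ 0 := ne_of_gt hκpos
    by_cases hir : i = r
    · rw [if_pos hir] at h1 ⊢
      field_simp at h1
      linarith
    · rw [if_neg hir] at h1 ⊢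
      field_simp at h1
      linarith
  have hperp : ∀ i ∈ J ∩ Set.Icc 1 n, ⟪ω, S.a i⟫ = 0 := by
    intro i hi
    obtain ⟨hiI, hir⟩ := (hJmem i).mp hi
    rw [hωa i hiI, if_neg hir]
  have hfix : w0J ω = ω := S.WJ_fixes hperp hw0J.1
  have happly : ∀ x, w0J (w0J⁻¹ x) = x := fun x => by simp
  have hωr : ⟪ω, S.a r⟫ = κ/2 := by rw [hωa r hr, if_pos rfl]
  have hsum : ∀ c : ℕ → ℝ, ⟪ω, ∑ i ∈ Finset.Icc 1 n, c i • S.a i⟫ = c r * (κ/2) := by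
    intro c
    rw [inner_sum]
    rw [Finset.sum_congr rfl (fun i hi => by rw [real_inner_smul_right, hωa i hi])]
    simp only [mul_ite, mul_zero]
    rw [Finset.sum_ite_eq' (Finset.Icc 1 n) r (fun i => c i * (κ/2)), if_pos hr]
  have hwfix : ∀ x, ⟪ω, w0J x⟫ = ⟪ω, x⟫ := by
    intro x
    conv_lhs => rw [← hfix]
    exact w0J.inner_map_map ω x
  have hwinvfix : ∀ x, ⟪ω, w0J⁻¹ x⟫ = ⟪ω, x⟫ := by
    intro x
    calc ⟪ω, w0J⁻¹ x⟫ = ⟪w0J ω, w0J (w0J⁻¹ x)⟫ := (w0J.inner_map_map ω _).symm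
      _ = ⟪ω, x⟫ := by rw [hfix, happly x]
  have hposof : ∀ β ∈ S.R, 0 < ⟪ω, β⟫ → S.IsPos β := by
    intro β hβ hpos
    rcases S.pos_or_neg hβ with h | h
    · exact h
    · exfalso
      obtain ⟨hmem, c, hc, hceq⟩ := h
      have h1 : ⟪ω, -β⟫ = c r * (κ/2) := by rw [hceq]; exact hsum c
      have h2 : 0 ≤ c r * (κ/2) := mul_nonneg (hc r) (by linarith)
      rw [inner_neg_right] at h1
      linarith
  constructor
  · -- minuscule implies w0J (a r) = α0
    intro hmin
    have hw0inv : S.IsLongest J w0J⁻¹ := S.isLongest_inv hw0J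
    have hnegs : ∀ i ∈ Finset.Icc 1 n, i ≠ r → S.IsNeg (w0J⁻¹ (S.a i)) := fun i hiI hir =>
      S.longest_neg hw0inv ((hJmem i).mpr ⟨hiI, hir⟩)
    have hβR : w0J (S.a r) ∈ S.R := S.WJ_maps_R hw0J.1 _ harR
    have hfβ : ⟪ω, w0J (S.a r)⟫ = κ/2 := by rw [hwfix, hωr]
    have hβpos : S.IsPos (w0J (S.a r)) := hposof _ hβR (by rw [hfβ]; linarith)
    obtain ⟨d, hd, hdeq⟩ := hα0.2 _ hβR
    have hα0R : α0 ∈ S.R := hα0.1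
    have hsplit : α0 = w0J (S.a r) + ∑ i ∈ Finset.Icc 1 n, d i • S.a i := by
      rw [← hdeq]; abel
    have hα0pos : S.IsPos α0 := by
      obtain ⟨-, c, hc, hceq⟩ := hβpos
      refine ⟨hα0R, fun i => c i + d i, fun i => add_nonneg (hc i) (hd i), ?_⟩
      rw [hsplit, hceq, ← Finset.sum_add_distrib]
      exact Finset.sum_congr rfl (fun i _ => (add_smul _ _ _).symm)
    have hκα0 : ⟪α0, α0⟫ = κ := hnorm _ hα0R
    have hm := hmin α0 hα0pos
    rw [hκα0, div_le_one hκpos] at hm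
    have hfδ : ⟪ω, α0 - w0J (S.a r)⟫ = d r * (κ/2) := by rw [hdeq]; exact hsum d
    have hsub : ⟪ω, α0 - w0J (S.a r)⟫ = ⟪ω, α0⟫ - ⟪ω, w0J (S.a r)⟫ := inner_sub_right _ _ _
    have hdr : d r = 0 := by
      have h2 : d r * (κ/2) ≤ 0 := by rw [← hfδ, hsub, hfβ]; linarith
      have h3 : 0 ≤ d r * (κ/2) := mul_nonneg (hd r) (by linarith)
      have h4 := hd r
      nlinarith
    have hfα0 : ⟪ω, α0⟫ = κ/2 := by
      rw [hdr, zero_mul] at hfδ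
      rw [hsub, hfβ] at hfδ
      linarith
    have hγR : w0J⁻¹ α0 ∈ S.R := S.WJ_maps_R (inv_mem hw0J.1) _ hα0R
    have hfγ : ⟪ω, w0J⁻¹ α0⟫ = κ/2 := by rw [hwinvfix, hfα0]
    have hγpos : S.IsPos (w0J⁻¹ α0) := hposof _ hγR (by rw [hfγ]; linarith)
    have Hneg : ∀ i, ∃ e : ℕ → ℝ, (∀ k, 0 ≤ e k) ∧ ((i ∈ Finset.Icc 1 n ∧ i ≠ r) →
        w0J⁻¹ (S.a i) = -∑ k ∈ Finset.Icc 1 n, e k • S.a k) := by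
      intro i
      by_cases h : i ∈ Finset.Icc 1 n ∧ i ≠ r
      · obtain ⟨-, e, he, heq⟩ := hnegs i h.1 h.2
        exact ⟨e, he, fun _ => by rw [← heq, neg_neg]⟩
      · exact ⟨fun _ => 0, fun _ => le_refl 0, fun hc => absurd hc h⟩
    choose E hE0 hEeq using Hneg
    have hγeq : w0J⁻¹ α0 =
        S.a r - ∑ k ∈ Finset.Icc 1 n, (∑ i ∈ Finset.Icc 1 n, d i * E i k) • S.a k := by
      have h1 : w0J⁻¹ α0 = S.a r + ∑ i ∈ Finset.Icc 1 n, d i • (w0J⁻¹ (S.a i)) := by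
        rw [hsplit, map_add, map_sum]
        congr 1
        · simp
        · exact Finset.sum_congr rfl (fun i _ => map_smul _ _ _)
      rw [h1]
      have h3 : ∑ i ∈ Finset.Icc 1 n, d i • (w0J⁻¹ (S.a i))
          = -∑ i ∈ Finset.Icc 1 n, ∑ k ∈ Finset.Icc 1 n, (d i * E i k) • S.a k := by
        rw [← Finset.sum_neg_distrib]
        refine Finset.sum_congr rfl (fun i hi => ?_)
        by_cases hir : i = r
        · subst hir
          rw [hdr, zero_smul]
          symm
          rw [neg_eq_zero]
          exact Finset.sum_eq_zero (fun k _ => by rw [zero_mul, zero_smul])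
        · rw [hEeq i ⟨hi, hir⟩, smul_neg]
          congr 1
          rw [Finset.smul_sum]
          exact Finset.sum_congr rfl (fun k _ => smul_smul (d i) (E i k) (S.a k))
      rw [h3, Finset.sum_comm]
      rw [Finset.sum_congr rfl (fun k (_ : k ∈ Finset.Icc 1 n) => (Finset.sum_smul).symm)]
      abel
    obtain ⟨-, g, hg, hgeq⟩ := hγpos
    have hunique : ∀ k ∈ Finset.Icc 1 n,
        g k = (if k = r then 1 else 0) - (∑ i ∈ Finset.Icc 1 n, d i * E i k) := by
      apply S.coeff_unique
      rw [← hgeq, hγeq]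
      rw [Finset.sum_congr rfl (fun k _ => sub_smul _ _ (S.a k)), Finset.sum_sub_distrib]
      congr 1
      simp only [ite_smul, one_smul, zero_smul]
      rw [Finset.sum_ite_eq' (Finset.Icc 1 n) r S.a, if_pos hr]
    have ht0 : ∀ k, 0 ≤ ∑ i ∈ Finset.Icc 1 n, d i * E i k :=
      fun k => Finset.sum_nonneg (fun i _ => mul_nonneg (hd i) (hE0 i k))
    have hfγ2 : ⟪ω, w0J⁻¹ α0⟫ = g r * (κ/2) := by rw [hgeq]; exact hsum g
    have hgr1 : g r = 1 := by
      rw [hfγ] at hfγ2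
      have hκ2 : κ/2 ≠ 0 := ne_of_gt (by linarith)
      field_simp at hfγ2
      linarith
    have htr : (∑ i ∈ Finset.Icc 1 n, d i * E i r) = 0 := by
      have h1 := hunique r hr
      rw [if_pos rfl, hgr1] at h1
      linarith
    have htall : ∀ k ∈ Finset.Icc 1 n, (∑ i ∈ Finset.Icc 1 n, d i * E i k) = 0 := by
      intro k hk
      by_cases hkr : k = r
      · rw [hkr]; exact htr
      · have h1 := hunique k hk
        rw [if_neg hkr] at h1
        have h2 := hg k
        have h3 := ht0 k
        linarith
    have hγar : w0J⁻¹ α0 = S.a r := by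
      rw [hγeq, Finset.sum_eq_zero (fun k hk => by rw [htall k hk, zero_smul])]
      simp
    calc w0J (S.a r) = w0J (w0J⁻¹ α0) := by rw [hγar]
      _ = α0 := happly α0
  · -- converse
    intro heq β hβpos
    obtain ⟨hβR, c, hc, hceq⟩ := hβpos
    have hβκ : ⟪β, β⟫ = κ := hnorm _ hβR
    have hfα0 : ⟪ω, α0⟫ = κ/2 := by rw [← heq, hwfix, hωr]
    obtain ⟨d, hd, hdeq⟩ := hα0.2 β hβR
    have h1 : ⟪ω, α0 - β⟫ = d r * (κ/2) := by rw [hdeq]; exact hsum d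
    have h2 : 0 ≤ d r * (κ/2) := mul_nonneg (hd r) (by linarith)
    have h3 : ⟪ω, α0 - β⟫ = ⟪ω, α0⟫ - ⟪ω, β⟫ := inner_sub_right _ _ _
    have h4 : ⟪ω, β⟫ ≤ κ/2 := by rw [h3, hfα0] at h1; linarith
    rw [hβκ, div_le_one hκpos]
    linarith

end PaperFormal
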